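/- Every relevant period extends to a reliable period of the same color: if v is relevant to u, then there exists z ∈ Σ* such that col_u(vz) = col_u(v) and vz is u-reliable. -/

import Mathlib

open scoped Classical

/-- Concatenation of a finite word with an infinite word. -/
def wcat {A : Type} (u : List A) (w : ℕ → A) : ℕ → A :=
  fun n => if h : n < u.length then u.get ⟨n, h⟩ else w (n - u.length)

/-- The infinite periodic word `v^ω`. -/
def wpow {A : Type} [Inhabited A] (v : List A) : ℕ → A :=
  fun n => v.getD (n % v.length) default

/-- The ultimately periodic word `u · v^ω`. -/
def upw {A : Type} [Inhabited A] (u v : List A) : ℕ → A := wcat u (wpow v)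

/-- The finite word `v^i`. -/
def wrep {A : Type} (v : List A) (i : ℕ) : List A := (List.replicate i v).flatten

/-- The right congruence `x ∼_L y`. -/
def simL {A : Type} (L : Set (ℕ → A)) (x y : List A) : Prop :=
  ∀ w : ℕ → A, wcat x w ∈ L ↔ wcat y w ∈ L

/-- `w` is `u`-invariant: `u ∼_L u·w`. -/
def UInv {A : Type} (L : Set (ℕ → A)) (u w : List A) : Prop := simL L u (u ++ w)

/-- `v` is relevant to `u`. -/
def URel {A : Type} (L : Set (ℕ → A)) (u v : List A) : Prop :=
  ∃ z : List A, UInv L u (v ++ z)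

/-- `v` has natural color at most `c` wrt `u`. -/
def ColorAtMost {A : Type} [Inhabited A] (L : Set (ℕ → A)) (u : List A) :
    ℕ → List A → Prop
  | c, v => ∀ z : List A, UInv L u (v ++ z) →
      ((upw u (v ++ z) ∈ L ↔ Even c) ∨
        ∃ i : ℕ, 0 < i ∧ ∃ c' : Fin c, ColorAtMost L u c' (wrep (v ++ z) i))
  termination_by c => c
  decreasing_by exact c'.isLt

/-- The natural color of the finite word `v` wrt `u`: `⊥` (i.e. `-∞`) if `v` is
irrelevant to `u`, and otherwise the minimal `c ≥ 0` as in the paper. -/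
noncomputable def ncol {A : Type} [Inhabited A] (L : Set (ℕ → A)) (u v : List A) :
    WithBot ℕ :=
  if URel L u v then ((sInf {c : ℕ | ColorAtMost L u c v} : ℕ) : WithBot ℕ) else ⊥

/-- `v` is stable wrt `u`. -/
def Stable {A : Type} [Inhabited A] (L : Set (ℕ → A)) (u v : List A) : Prop :=
  ∀ i : ℕ, 0 < i → ncol L u v = ncol L u (wrep v i)

/-- `v` is `u`-reliable. -/
def UReliable {A : Type} [Inhabited A] (L : Set (ℕ → A)) (u v : List A) : Prop :=
  UInv L u v ∧ Stable L u v

/-- The natural color of an ultimately periodic infinite word. -/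
noncomputable def icol {A : Type} [Inhabited A] (L : Set (ℕ → A)) (w : ℕ → A) : ℕ :=
  sInf {c : ℕ | ∃ u v : List A, v ≠ [] ∧ w = upw u v ∧ UInv L u v ∧
    ncol L u v = (c : WithBot ℕ)}

/-- The set of states visited infinitely often by a run. -/
def infSet {Q : Type} (r : ℕ → Q) : Set Q := {q | ∀ n : ℕ, ∃ m : ℕ, n ≤ m ∧ r m = q}

/-- The run of a complete deterministic automaton on an infinite word. -/
def runOf {A Q : Type} (δ : Q → A → Q) (q0 : Q) (w : ℕ → A) : ℕ → Q
  | 0 => q0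
  | n + 1 => δ (runOf δ q0 w n) (w n)

/-- `L` is ω-regular: recognized by some deterministic Muller automaton. -/
def OmegaRegular {A : Type} (L : Set (ℕ → A)) : Prop :=
  ∃ (Q : Type) (_ : Fintype Q) (q0 : Q) (δ : Q → A → Q) (α : Set (Set Q)),
    ∀ w : ℕ → A, w ∈ L ↔ infSet (runOf δ q0 w) ∈ α
section Words
variable {A : Type}

theorem wcat_lt (u : List A) (w : ℕ → A) {n : ℕ} (h : n < u.length) :
    wcat u w n = u.get ⟨n, h⟩ := dif_pos h

theorem wcat_ge (u : List A) (w : ℕ → A) {n : ℕ} (h : u.length ≤ n) :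
    wcat u w n = w (n - u.length) := dif_neg (by omega)

theorem wcat_append (x y : List A) (w : ℕ → A) :
    wcat (x ++ y) w = wcat x (wcat y w) := by
  funext n
  simp only [wcat, List.length_append, List.get_eq_getElem]
  rcases lt_or_ge n x.length with h1 | h1
  · rw [dif_pos (show n < x.length + y.length by omega), dif_pos h1,
      List.getElem_append_left h1]
  · rcases lt_or_ge n (x.length + y.length) with h2 | h2
    · rw [dif_pos h2, dif_neg (show ¬ n < x.length by omega),
        dif_pos (show n - x.length < y.length by omega),
        List.getElem_append_right h1]
    · rw [dif_neg (show ¬ n < x.length + y.length by omega),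
        dif_neg (show ¬ n < x.length by omega),
        dif_neg (show ¬ n - x.length < y.length by omega)]
      congr 1
      omega

theorem simL_symm {L : Set (ℕ → A)} {x y : List A} (h : simL L x y) : simL L y x :=
  fun w => (h w).symm

theorem simL_trans {L : Set (ℕ → A)} {x y z : List A} (h1 : simL L x y)
    (h2 : simL L y z) : simL L x z := fun w => (h1 w).trans (h2 w)

theorem simL_append {L : Set (ℕ → A)} {x y : List A} (h : simL L x y) (w : List A) :
    simL L (x ++ w) (y ++ w) := by
  intro ρ
  rw [wcat_append, wcat_append]
  exact h _

theorem wrep_zero (v : List A) : wrep v 0 = [] := rfl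

theorem wrep_succ (v : List A) (i : ℕ) : wrep v (i + 1) = v ++ wrep v i := by
  simp [wrep, List.replicate_succ]

theorem wrep_one (v : List A) : wrep v 1 = v := by simp [wrep]

theorem wrep_add (v : List A) (a b : ℕ) : wrep v (a + b) = wrep v a ++ wrep v b := by
  unfold wrep
  rw [List.replicate_add, List.flatten_append]

theorem wrep_wrep (v : List A) (i j : ℕ) : wrep (wrep v i) j = wrep v (i * j) := by
  induction j with
  | zero => simp [wrep_zero]
  | succ j ih =>
      rw [wrep_succ, ih, ← wrep_add]
      congr 1
      ring

theorem wrep_length (v : List A) (i : ℕ) : (wrep v i).length = i * v.length := by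
  induction i with
  | zero => simp [wrep_zero]
  | succ i ih => rw [wrep_succ, List.length_append, ih, Nat.succ_mul]; omega

theorem wrep_ne_nil {v : List A} (hv : v ≠ []) {i : ℕ} (hi : 0 < i) :
    wrep v i ≠ [] := by
  obtain ⟨j, rfl⟩ : ∃ j, i = j + 1 := ⟨i - 1, by omega⟩
  rw [wrep_succ]
  simp [hv]

theorem uinv_append {L : Set (ℕ → A)} {u x y : List A} (hx : UInv L u x)
    (hy : UInv L u y) : UInv L u (x ++ y) := by
  have h1 : simL L (u ++ y) ((u ++ x) ++ y) := simL_append hx y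
  have h2 : simL L u ((u ++ x) ++ y) := simL_trans hy h1
  rw [List.append_assoc] at h2
  exact h2

theorem uinv_wrep {L : Set (ℕ → A)} {u v : List A} (h : UInv L u v) (i : ℕ) :
    UInv L u (wrep v i) := by
  induction i with
  | zero =>
      rw [wrep_zero]
      unfold UInv
      rw [List.append_nil]
      exact fun w => Iff.rfl
  | succ i ih =>
      rw [wrep_succ]
      exact uinv_append h ih

theorem urel_of_uinv {L : Set (ℕ → A)} {u v : List A} (h : UInv L u v) :
    URel L u v := ⟨[], by rwa [List.append_nil]⟩

end Words

section WordsI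
variable {A : Type} [Inhabited A]

theorem wrep_getD (v : List A) (d : A) {i n : ℕ} (h : n < i * v.length) :
    (wrep v i).getD n d = v.getD (n % v.length) d := by
  induction i generalizing n with
  | zero => omega
  | succ i ih =>
      rw [Nat.succ_mul] at h
      rw [wrep_succ]
      rcases lt_or_ge n v.length with h1 | h1
      · rw [List.getD_append _ _ _ _ h1, Nat.mod_eq_of_lt h1]
      · obtain ⟨m, rfl⟩ : ∃ m, n = v.length + m := ⟨n - v.length, by omega⟩
        rw [List.getD_append_right _ _ _ _ h1, Nat.add_mod_left]
        have : v.length + m - v.length = m := by omega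
        rw [this]
        exact ih (by omega)

theorem wpow_wrep {v : List A} (hv : v ≠ []) {i : ℕ} (hi : 0 < i) :
    wpow (wrep v i) = wpow v := by
  have hlen : 0 < v.length := List.length_pos_iff.2 hv
  funext n
  simp only [wpow, wrep_length]
  have h1 : n % (i * v.length) < i * v.length :=
    Nat.mod_lt _ (Nat.mul_pos hi hlen)
  rw [wrep_getD v default h1, Nat.mod_mod_of_dvd n (dvd_mul_left v.length i)]

theorem upw_wrep (u : List A) {v : List A} (hv : v ≠ []) {i : ℕ} (hi : 0 < i) :
    upw u (wrep v i) = upw u v := by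
  unfold upw
  rw [wpow_wrep hv hi]

end WordsI
section Color
variable {A : Type} [Inhabited A] {L : Set (ℕ → A)} {u : List A}

theorem colorAtMost_append {c : ℕ} {v : List A} (h : ColorAtMost L u c v)
    (w : List A) : ColorAtMost L u c (v ++ w) := by
  rw [ColorAtMost] at h ⊢
  intro z hz
  rw [List.append_assoc] at hz
  have := h (w ++ z) hz
  rwa [← List.append_assoc] at this

theorem colorAtMost_succ {c : ℕ} {v : List A} (h : ColorAtMost L u c v) :
    ColorAtMost L u (c + 1) v := by
  have h0 := h
  rw [ColorAtMost] at h ⊢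
  intro z hz
  rcases h z hz with h1 | ⟨i, hi, c', h2⟩
  · right
    refine ⟨1, one_pos, ⟨c, Nat.lt_succ_self c⟩, ?_⟩
    rw [wrep_one]
    exact colorAtMost_append h0 z
  · right
    exact ⟨i, hi, ⟨c'.1, Nat.lt_succ_of_lt c'.isLt⟩, h2⟩

theorem colorAtMost_le {c d : ℕ} {v : List A} (hcd : c ≤ d)
    (h : ColorAtMost L u c v) : ColorAtMost L u d v := by
  induction d with
  | zero => rwa [Nat.le_zero.mp hcd] at h
  | succ d ih =>
      rcases Nat.lt_or_ge c (d + 1) with h1 | h1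
      · exact colorAtMost_succ (ih (by omega))
      · rwa [show c = d + 1 by omega] at h

theorem colorAtMost_wrep {c : ℕ} {v : List A} (h : ColorAtMost L u c v)
    {i : ℕ} (hi : 0 < i) : ColorAtMost L u c (wrep v i) := by
  obtain ⟨j, rfl⟩ : ∃ j, i = j + 1 := ⟨i - 1, by omega⟩
  rw [wrep_succ]
  exact colorAtMost_append h _

end Color
section Auto
variable {A Q : Type} (δ : Q → A → Q)

/-- Extended transition function. -/
def dstar (q : Q) (x : List A) : Q := x.foldl δ q

theorem dstar_nil (q : Q) : dstar δ q [] = q := rfl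

theorem dstar_append (q : Q) (x y : List A) :
    dstar δ q (x ++ y) = dstar δ (dstar δ q x) y := by simp [dstar]

/-- The set of states visited while reading `x` from `q` (excluding the final state,
including the initial one, when `x` is nonempty). -/
def vset (q : Q) (x : List A) : Set Q := {p | ∃ k < x.length, dstar δ q (x.take k) = p}

/-- The profile of a finite word. -/
def prof (x : List A) : Q → Q × Set Q := fun q => (dstar δ q x, vset δ q x)

theorem vset_append (q : Q) (x y : List A) :
    vset δ q (x ++ y) = vset δ q x ∪ vset δ (dstar δ q x) y := by
  ext p
  constructor
  · rintro ⟨k, hk, rfl⟩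
    rw [List.length_append] at hk
    rcases lt_or_ge k x.length with h1 | h1
    · left
      exact ⟨k, h1, by rw [List.take_append_of_le_length (le_of_lt h1)]⟩
    · right
      refine ⟨k - x.length, by omega, ?_⟩
      rw [← dstar_append]
      congr 1
      rw [List.take_append, List.take_of_length_le h1]
  · rintro (⟨k, hk, rfl⟩ | ⟨k, hk, rfl⟩)
    · exact ⟨k, by rw [List.length_append]; omega,
        by rw [List.take_append_of_le_length (le_of_lt hk)]⟩
    · refine ⟨x.length + k, by rw [List.length_append]; omega, ?_⟩
      rw [List.take_append, List.take_of_length_le (by omega),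
        dstar_append]
      congr 2
      omega

theorem prof_fst (x : List A) (q : Q) : ((prof δ x) q).1 = dstar δ q x := rfl

theorem prof_congr_append {x x' y y' : List A} (hx : prof δ x = prof δ x')
    (hy : prof δ y = prof δ y') : prof δ (x ++ y) = prof δ (x' ++ y') := by
  funext q
  have hx1 : dstar δ q x = dstar δ q x' := congrArg Prod.fst (congrFun hx q)
  have hx2 : vset δ q x = vset δ q x' := congrArg Prod.snd (congrFun hx q)
  have hy1 : dstar δ (dstar δ q x) y = dstar δ (dstar δ q x) y' :=
    congrArg Prod.fst (congrFun hy (dstar δ q x))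
  have hy2 : vset δ (dstar δ q x) y = vset δ (dstar δ q x) y' :=
    congrArg Prod.snd (congrFun hy (dstar δ q x))
  show (dstar δ q (x ++ y), vset δ q (x ++ y)) = (dstar δ q (x' ++ y'), vset δ q (x' ++ y'))
  rw [dstar_append, dstar_append, vset_append, vset_append, hy1, hy2, hx1, hx2]

theorem prof_congr_wrep {x y : List A} (h : prof δ x = prof δ y) (i : ℕ) :
    prof δ (wrep x i) = prof δ (wrep y i) := by
  induction i with
  | zero => rw [wrep_zero, wrep_zero]
  | succ i ih => rw [wrep_succ, wrep_succ]; exact prof_congr_append δ h ih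

theorem prof_nil_iff (q : Q) {x y : List A} (h : prof δ x = prof δ y) :
    x = [] ↔ y = [] := by
  have h2 : vset δ q x = vset δ q y := congrArg Prod.snd (congrFun h q)
  constructor
  · intro hx
    subst hx
    by_contra hy
    have : q ∈ vset δ q y := ⟨0, List.length_pos_iff.2 hy, rfl⟩
    rw [← h2] at this
    obtain ⟨k, hk, -⟩ := this
    simp at hk
  · intro hy
    subst hy
    by_contra hx
    have : q ∈ vset δ q x := ⟨0, List.length_pos_iff.2 hx, rfl⟩
    rw [h2] at this
    obtain ⟨k, hk, -⟩ := this
    simp at hk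

theorem runOf_eq_dstar (q : Q) (w : ℕ → A) (n : ℕ) :
    runOf δ q w n = dstar δ q (List.ofFn fun i : Fin n => w i) := by
  induction n with
  | zero => rfl
  | succ n ih =>
      show δ (runOf δ q w n) (w n) = _
      rw [ih, List.ofFn_succ']
      rw [List.concat_eq_append, dstar_append]
      simp [dstar]

theorem run_wcat (q : Q) (x : List A) (w : ℕ → A) (n : ℕ) :
    runOf δ q (wcat x w) (x.length + n) = runOf δ (dstar δ q x) w n := by
  induction n with
  | zero =>
      show runOf δ q (wcat x w) x.length = dstar δ q x
      rw [runOf_eq_dstar]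
      congr 1
      have : (fun i : Fin x.length => wcat x w i) = fun i : Fin x.length => x.get i := by
        funext i
        exact wcat_lt x w i.isLt
      rw [this, List.ofFn_get]
  | succ n ih =>
      show δ (runOf δ q (wcat x w) (x.length + n)) (wcat x w (x.length + n)) = _
      rw [ih, wcat_ge x w (Nat.le_add_right _ _), Nat.add_sub_cancel_left]
      rfl

theorem infSet_shift (r : ℕ → Q) (k : ℕ) : infSet (fun n => r (k + n)) = infSet r := by
  ext q
  constructor
  · intro h n
    obtain ⟨m, hm, he⟩ := h n
    exact ⟨k + m, le_trans hm (Nat.le_add_left m k), he⟩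
  · intro h n
    obtain ⟨m, hm, he⟩ := h (k + n)
    refine ⟨m - k, by omega, ?_⟩
    show r (k + (m - k)) = q
    rw [show k + (m - k) = m by omega]
    exact he

theorem infSet_run_wcat (q : Q) (x : List A) (w : ℕ → A) :
    infSet (runOf δ q (wcat x w)) = infSet (runOf δ (dstar δ q x) w) := by
  have h : (fun n => runOf δ q (wcat x w) (x.length + n)) = runOf δ (dstar δ q x) w := by
    funext n
    exact run_wcat δ q x w n
  rw [← infSet_shift (runOf δ q (wcat x w)) x.length, h]

end Auto
section AutoPeriodic
variable {A Q : Type} [Inhabited A] (δ : Q → A → Q)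

theorem dstar_wrep (q : Q) (w : List A) (t : ℕ) :
    dstar δ q (wrep w t) = (fun p => dstar δ p w)^[t] q := by
  induction t generalizing q with
  | zero => rfl
  | succ t ih =>
      rw [wrep_succ, dstar_append, ih, Function.iterate_succ_apply]

theorem ofFn_wpow {w : List A} (hw : w ≠ []) (t : ℕ) {r : ℕ} (hr : r ≤ w.length) :
    List.ofFn (fun i : Fin (t * w.length + r) => wpow w i) = wrep w t ++ w.take r := by
  have hlen : 0 < w.length := List.length_pos_iff.2 hw
  apply List.ext_getElem
  · rw [List.length_ofFn, List.length_append, wrep_length, List.length_take]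
    omega
  · intro i hi1 hi2
    rw [List.getElem_ofFn]
    have hi : i < t * w.length + r := by rwa [List.length_ofFn] at hi1
    have himod : i % w.length < w.length := Nat.mod_lt _ hlen
    show wpow w i = _
    rw [← List.getD_eq_getElem (wrep w t ++ w.take r) default hi2, wpow]
    rcases lt_or_ge i (t * w.length) with h1 | h1
    · rw [List.getD_append _ _ _ _ (by rw [wrep_length]; omega)]
      exact (wrep_getD w default h1).symm
    · obtain ⟨j, rfl⟩ : ∃ j, i = t * w.length + j := ⟨i - t * w.length, by omega⟩
      have hj : j < r := by omega
      have hmod : (t * w.length + j) % w.length = j := by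
        rw [Nat.mul_comm, Nat.mul_add_mod, Nat.mod_eq_of_lt (by omega)]
      rw [List.getD_append_right _ _ _ _ (by rw [wrep_length]; omega), wrep_length]
      have hj2 : t * w.length + j - t * w.length = j := by omega
      rw [hj2, hmod]
      rw [List.getD_eq_getElem (w.take r) default
          (by rw [List.length_take]; omega), List.getElem_take,
        List.getD_eq_getElem w default (by omega)]

theorem run_upw (q0 : Q) (u : List A) {w : List A} (hw : w ≠ []) (t : ℕ) {r : ℕ}
    (hr : r ≤ w.length) :
    runOf δ q0 (upw u w) (u.length + (t * w.length + r)) =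
      dstar δ ((fun p => dstar δ p w)^[t] (dstar δ q0 u)) (w.take r) := by
  rw [upw, run_wcat, runOf_eq_dstar, ofFn_wpow hw t hr, dstar_append, dstar_wrep]

theorem infSet_upw [Fintype Q] (q0 : Q) (u : List A) {w : List A} (hw : w ≠ []) :
    infSet (runOf δ q0 (upw u w)) =
      {p | ∃ s : Q, (∀ n : ℕ, ∃ t : ℕ, n ≤ t ∧
          (fun p => dstar δ p w)^[t] (dstar δ q0 u) = s) ∧ p ∈ vset δ s w} := by
  classical
  have hlen : 0 < w.length := List.length_pos_iff.2 hw
  ext p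
  constructor
  · intro hp
    by_contra hcon
    simp only [Set.mem_setOf_eq] at hcon
    push_neg at hcon
    have hT : ∀ n : ℕ, ∃ t : ℕ, n ≤ t ∧
        p ∈ vset δ ((fun p => dstar δ p w)^[t] (dstar δ q0 u)) w := by
      intro n
      obtain ⟨m, hm, he⟩ := hp (u.length + n * w.length)
      refine ⟨(m - u.length) / w.length, ?_, ?_⟩
      · exact (Nat.le_div_iff_mul_le hlen).mpr (by omega)
      · refine ⟨(m - u.length) % w.length, Nat.mod_lt _ hlen, ?_⟩
        have hm2 : m = u.length +
            ((m - u.length) / w.length * w.length + (m - u.length) % w.length) := by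
          have := Nat.div_add_mod (m - u.length) w.length
          rw [Nat.mul_comm] at this
          omega
        rw [← run_upw δ q0 u hw _ (le_of_lt (Nat.mod_lt _ hlen)), ← hm2]
        exact he
    have hfin : ∀ s : Q, ∃ N : ℕ, p ∈ vset δ s w →
        ∀ t : ℕ, N ≤ t → (fun p => dstar δ p w)^[t] (dstar δ q0 u) ≠ s := by
      intro s
      by_cases hs : p ∈ vset δ s w
      · have := hcon s
        rcases Classical.em (∀ n : ℕ, ∃ t : ℕ, n ≤ t ∧
            (fun p => dstar δ p w)^[t] (dstar δ q0 u) = s) with hall | hnall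
        · exact absurd hs (this hall)
        · push_neg at hnall
          obtain ⟨N, hN⟩ := hnall
          exact ⟨N, fun _ t ht => hN t ht⟩
      · exact ⟨0, fun h => absurd h hs⟩
    choose Nf hNf using hfin
    obtain ⟨t, htN, htT⟩ := hT (Finset.univ.sup Nf)
    exact hNf _ htT t (le_trans (Finset.le_sup (Finset.mem_univ _)) htN) rfl
  · rintro ⟨s, hs, r, hrw, hrun⟩
    intro n
    obtain ⟨t, ht, hts⟩ := hs n
    refine ⟨u.length + (t * w.length + r), ?_, ?_⟩
    · have : t ≤ t * w.length := Nat.le_mul_of_pos_right t hlen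
      omega
    · rw [run_upw δ q0 u hw t (le_of_lt hrw), hts, hrun]

end AutoPeriodic
section Transfer
variable {A Q : Type} [Inhabited A] [Fintype Q] {L : Set (ℕ → A)}
  (δ : Q → A → Q) (q0 : Q) (α : Set (Set Q))

theorem mem_wcat_congr (hspec : ∀ w : ℕ → A, w ∈ L ↔ infSet (runOf δ q0 w) ∈ α)
    {x y : List A} (hst : dstar δ q0 x = dstar δ q0 y) (w : ℕ → A) :
    wcat x w ∈ L ↔ wcat y w ∈ L := by
  rw [hspec, hspec, infSet_run_wcat, infSet_run_wcat, hst]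

theorem uinv_transfer (hspec : ∀ w : ℕ → A, w ∈ L ↔ infSet (runOf δ q0 w) ∈ α)
    {u x y z : List A} (hp : prof δ x = prof δ y) (h : UInv L u (x ++ z)) :
    UInv L u (y ++ z) := by
  intro ρ
  rw [h ρ]
  apply mem_wcat_congr δ q0 α hspec
  rw [dstar_append, dstar_append, dstar_append, dstar_append]
  congr 1
  exact congrArg Prod.fst (congrFun hp (dstar δ q0 u))

theorem upw_mem_transfer (hspec : ∀ w : ℕ → A, w ∈ L ↔ infSet (runOf δ q0 w) ∈ α)
    {u x y : List A} (hp : prof δ x = prof δ y) :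
    upw u x ∈ L ↔ upw u y ∈ L := by
  by_cases hx : x = []
  · have hy : y = [] := (prof_nil_iff δ q0 hp).mp hx
    rw [hx, hy]
  · have hy : y ≠ [] := fun h => hx ((prof_nil_iff δ q0 hp).mpr h)
    rw [hspec, hspec, infSet_upw δ q0 u hx, infSet_upw δ q0 u hy]
    have hf : (fun p => dstar δ p x) = (fun p => dstar δ p y) :=
      funext fun s => congrArg Prod.fst (congrFun hp s)
    have hv : ∀ s, vset δ s x = vset δ s y :=
      fun s => congrArg Prod.snd (congrFun hp s)
    simp only [hf, hv]

theorem colorAtMost_congr (hspec : ∀ w : ℕ → A, w ∈ L ↔ infSet (runOf δ q0 w) ∈ α)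
    {u : List A} (c : ℕ) :
    ∀ x y : List A, prof δ x = prof δ y → ColorAtMost L u c x → ColorAtMost L u c y := by
  induction c using Nat.strong_induction_on with
  | _ c IH =>
    intro x y hp hx
    rw [ColorAtMost] at hx ⊢
    intro z hz
    have hxz : UInv L u (x ++ z) := uinv_transfer δ q0 α hspec hp.symm hz
    rcases hx z hxz with h1 | ⟨i, hi, c', h2⟩
    · left
      exact (upw_mem_transfer δ q0 α hspec
        (prof_congr_append δ hp (rfl : prof δ z = prof δ z))).symm.trans h1
    · right
      exact ⟨i, hi, c', IH c' c'.isLt _ _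
        (prof_congr_wrep δ (prof_congr_append δ hp rfl) i) h2⟩

theorem exists_colorBound (hspec : ∀ w : ℕ → A, w ∈ L ↔ infSet (runOf δ q0 w) ∈ α)
    (u : List A) :
    ∃ B : ℕ, ∀ x : List A, sInf {c | ColorAtMost L u c x} ≤ B := by
  classical
  have hfac : ∀ x y : List A, prof δ x = prof δ y →
      sInf {c | ColorAtMost L u c x} = sInf {c | ColorAtMost L u c y} := by
    intro x y hp
    congr 1
    ext c
    exact ⟨colorAtMost_congr δ q0 α hspec c x y hp,
      colorAtMost_congr δ q0 α hspec c y x hp.symm⟩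
  set F : List A → ℕ := fun x => sInf {c | ColorAtMost L u c x} with hF
  set H : (Q → Q × Set Q) → ℕ :=
    fun p => if h : ∃ x : List A, prof δ x = p then F h.choose else 0 with hH
  have hFH : ∀ x, F x = H (prof δ x) := by
    intro x
    have hex : ∃ y : List A, prof δ y = prof δ x := ⟨x, rfl⟩
    rw [hH]
    simp only [dif_pos hex]
    exact hfac x hex.choose (hex.choose_spec.symm)
  have hfin : (Set.range F).Finite := by
    have hsub : Set.range F ⊆ Set.range H := by
      rintro n ⟨x, rfl⟩
      exact ⟨prof δ x, (hFH x).symm⟩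
    exact (Set.finite_range H).subset hsub
  obtain ⟨B, hB⟩ := hfin.bddAbove
  exact ⟨B, fun x => hB ⟨x, rfl⟩⟩

end Transfer
/-- every relevant period extends to a reliable period of the same
color. -/
theorem extend_to_reliable_same_color {A : Type} [Inhabited A] (L : Set (ℕ → A))
    (hreg : OmegaRegular L) (u v : List A) (hv : v ≠ []) (hrel : URel L u v) :
    ∃ z : List A, ncol L u (v ++ z) = ncol L u v ∧ UReliable L u (v ++ z) := by
  classical
  obtain ⟨Q, instQ, q0, δ, α, hspec⟩ := hreg
  have hncol : ∀ x : List A, URel L u x →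
      ncol L u x = ((sInf {c | ColorAtMost L u c x} : ℕ) : WithBot ℕ) := by
    intro x hx
    rw [ncol, if_pos hx]
  obtain ⟨B, hB⟩ := exists_colorBound δ q0 α hspec u
  by_cases hne : {c | ColorAtMost L u c v}.Nonempty
  · -- the natural color of `v` is well defined
    have hcv : ColorAtMost L u (sInf {c | ColorAtMost L u c v}) v := Nat.sInf_mem hne
    rcases Nat.eq_zero_or_pos (sInf {c | ColorAtMost L u c v}) with hc0 | hcpos
    · -- color 0: any invariant extension works
      obtain ⟨z, hz⟩ := id hrel
      have h0 : ColorAtMost L u 0 v := by rwa [hc0] at hcv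
      have key : ∀ i, 0 < i →
          sInf {c | ColorAtMost L u c (wrep (v ++ z) i)} = 0 := fun i hi =>
        Nat.le_zero.mp (Nat.sInf_le (colorAtMost_wrep (colorAtMost_append h0 z) hi))
      have key1 : sInf {c | ColorAtMost L u c (v ++ z)} = 0 := by
        have := key 1 one_pos
        rwa [wrep_one] at this
      refine ⟨z, ?_, hz, ?_⟩
      · rw [hncol (v ++ z) (urel_of_uinv hz), hncol v hrel, key1, hc0]
      · intro i hi
        rw [hncol (v ++ z) (urel_of_uinv hz),
          hncol _ (urel_of_uinv (uinv_wrep hz i)), key1, key i hi]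
    · -- positive color c = d + 1
      obtain ⟨d, hd⟩ : ∃ d, sInf {c | ColorAtMost L u c v} = d + 1 :=
        ⟨sInf {c | ColorAtMost L u c v} - 1, by omega⟩
      have hnotd : ¬ ColorAtMost L u d v := by
        intro h
        have := Nat.sInf_le (show d ∈ {c | ColorAtMost L u c v} from h)
        omega
      rw [ColorAtMost] at hnotd
      push_neg at hnotd
      obtain ⟨z, hzinv, hpar, hpow⟩ := hnotd
      have hwne : v ++ z ≠ [] := fun h => hv (List.append_eq_nil_iff.mp h).1
      have hfull : ∀ i, 0 < i →
          sInf {e | ColorAtMost L u e (wrep (v ++ z) i)} =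
            sInf {c | ColorAtMost L u c v} := by
        intro i hi
        have hmem : sInf {c | ColorAtMost L u c v} ∈
            {e | ColorAtMost L u e (wrep (v ++ z) i)} :=
          colorAtMost_wrep (colorAtMost_append hcv z) hi
        have hle : sInf {e | ColorAtMost L u e (wrep (v ++ z) i)} ≤
            sInf {c | ColorAtMost L u c v} := Nat.sInf_le hmem
        rcases Nat.lt_or_ge (sInf {e | ColorAtMost L u e (wrep (v ++ z) i)})
          (sInf {c | ColorAtMost L u c v}) with hlt | hge
        · exfalso
          have hm : sInf {e | ColorAtMost L u e (wrep (v ++ z) i)} ∈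
              {e | ColorAtMost L u e (wrep (v ++ z) i)} := Nat.sInf_mem ⟨_, hmem⟩
          have hdd : ColorAtMost L u d (wrep (v ++ z) i) :=
            colorAtMost_le (by omega) hm
          rw [ColorAtMost] at hdd
          have hinv' : UInv L u (wrep (v ++ z) i ++ []) := by
            rw [List.append_nil]
            exact uinv_wrep hzinv i
          rcases hdd [] hinv' with h1 | ⟨j, hj, c', h2⟩
          · rw [List.append_nil, upw_wrep u hwne hi] at h1
            rcases hpar with ⟨hm1, hm2⟩ | ⟨hm1, hm2⟩
            · exact hm2 (h1.mp hm1)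
            · exact hm1 (h1.mpr hm2)
          · rw [List.append_nil, wrep_wrep] at h2
            exact hpow (i * j) (by positivity) c' h2
        · omega
      have hfull1 : sInf {e | ColorAtMost L u e (v ++ z)} =
          sInf {c | ColorAtMost L u c v} := by
        have := hfull 1 one_pos
        rwa [wrep_one] at this
      refine ⟨z, ?_, hzinv, ?_⟩
      · rw [hncol (v ++ z) (urel_of_uinv hzinv), hncol v hrel, hfull1]
      · intro i hi
        rw [hncol (v ++ z) (urel_of_uinv hzinv),
          hncol _ (urel_of_uinv (uinv_wrep hzinv i)), hfull1, hfull i hi]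
  · -- the color set of `v` is empty
    have hnc : ∀ e, ¬ ColorAtMost L u e v := fun e he => hne ⟨e, he⟩
    have hnB := hnc (B + 1)
    rw [ColorAtMost] at hnB
    push_neg at hnB
    obtain ⟨z, hzinv, hpar, hpow⟩ := hnB
    have hempty : ∀ i, 0 < i →
        {e | ColorAtMost L u e (wrep (v ++ z) i)} = ∅ := by
      intro i hi
      by_contra hx
      have hnonempty : {e | ColorAtMost L u e (wrep (v ++ z) i)}.Nonempty :=
        Set.nonempty_iff_ne_empty.mpr hx
      have hm := Nat.sInf_mem hnonempty
      have hle : sInf {e | ColorAtMost L u e (wrep (v ++ z) i)} ≤ B := hB _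
      exact hpow i hi ⟨sInf {e | ColorAtMost L u e (wrep (v ++ z) i)}, by omega⟩ hm
    have hempty1 : {e | ColorAtMost L u e (v ++ z)} = ∅ := by
      have := hempty 1 one_pos
      rwa [wrep_one] at this
    have hvempty : {c | ColorAtMost L u c v} = ∅ :=
      Set.not_nonempty_iff_eq_empty.mp hne
    refine ⟨z, ?_, hzinv, ?_⟩
    · rw [hncol (v ++ z) (urel_of_uinv hzinv), hncol v hrel, hempty1, hvempty]
    · intro i hi
      rw [hncol (v ++ z) (urel_of_uinv hzinv),
        hncol _ (urel_of_uinv (uinv_wrep hzinv i)), hempty1, hempty i hi]
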